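/- Let L = K(θ) be a cubic separable extension of a field K where θ has monic minimal polynomial f = X³ + aX² + bX + c. Then for the K-basis B = {1, θ, θ²} of L, the index form satisfies I_B(X + aY, Y) = X³ + aX²Y + bXY² + cY³, the homogenization of f. -/

import Mathlib

open Polynomial

/-- Let `L = K(θ)` be a cubic separable extension of `K` where `θ` has monic minimal
polynomial `f = X³ + aX² + bX + c`.  For the `K`-basis `{1, θ, θ²}` of `L`, the index
form `I` (given by the determinant of the coordinate matrix of `1, γ, γ²` for
`γ = xθ + yθ²`) satisfies `I(X + aY, Y) = X³ + aX²Y + bXY² + cY³`, the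
homogenization of `f`. -/
theorem indexForm_of_power_basis (K L : Type*) [Field K] [Field L] [Algebra K L]
    [Algebra.IsSeparable K L] (hdeg : Module.finrank K L = 3)
    (θ : L) (a b c : K)
    (hmin : minpoly K θ = X ^ 3 + C a * X ^ 2 + C b * X + C c)
    (β : Module.Basis (Fin 3) K L) (hβ : ∀ i : Fin 3, β i = θ ^ (i : ℕ)) :
    ∀ x y : K,
      (Matrix.of fun i j : Fin 3 =>
          β.repr (((x + a * y) • θ + y • θ ^ 2) ^ (i : ℕ)) j).det =
        x ^ 3 + a * x ^ 2 * y + b * x * y ^ 2 + c * y ^ 3 := by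
  intro x y
  have h0 : β 0 = 1 := by simpa using hβ 0
  have h1 : β 1 = θ := by simpa using hβ 1
  have h2 : β 2 = θ ^ 2 := by simpa using hβ 2
  have key : ∀ (c0 c1 c2 : K) (j : Fin 3),
      β.repr (c0 • (1 : L) + c1 • θ + c2 • θ ^ 2) j = ![c0, c1, c2] j := by
    intro c0 c1 c2 j
    rw [← h2, ← h1, ← h0]
    simp only [map_add, map_smul, Module.Basis.repr_self, Finsupp.coe_add, Finsupp.coe_smul,
      Pi.add_apply, Pi.smul_apply, Finsupp.single_apply, smul_eq_mul]
    fin_cases j <;> simp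
  have hf := minpoly.aeval K θ
  rw [hmin] at hf
  simp only [map_add, map_mul, map_pow, aeval_X, aeval_C] at hf
  -- hf : θ ^ 3 + algebraMap K L a * θ ^ 2 + algebraMap K L b * θ + algebraMap K L c = 0
  set γ : L := (x + a * y) • θ + y • θ ^ 2 with hγ
  have e0 : ∀ j, β.repr (γ ^ (0 : ℕ)) j = ![1, 0, 0] j := by
    intro j
    have : γ ^ (0 : ℕ) = (1 : K) • (1 : L) + (0 : K) • θ + (0 : K) • θ ^ 2 := by simp
    rw [this, key]
  have e1 : ∀ j, β.repr (γ ^ (1 : ℕ)) j = ![0, x + a * y, y] j := by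
    intro j
    have : γ ^ (1 : ℕ) = (0 : K) • (1 : L) + (x + a * y) • θ + y • θ ^ 2 := by
      simp [hγ]
    rw [this, key]
  have e2 : ∀ j, β.repr (γ ^ (2 : ℕ)) j =
      ![-2 * c * x * y - a * c * y ^ 2, -2 * b * x * y - (a * b + c) * y ^ 2,
        x ^ 2 - b * y ^ 2] j := by
    intro j
    have hexp : γ ^ (2 : ℕ) = (-2 * c * x * y - a * c * y ^ 2) • (1 : L) +
        (-2 * b * x * y - (a * b + c) * y ^ 2) • θ + (x ^ 2 - b * y ^ 2) • θ ^ 2 := by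
      simp only [hγ, Algebra.smul_def, map_add, map_sub, map_mul, map_neg, map_pow,
        map_ofNat]
      linear_combination (2 * ((algebraMap K L x) + (algebraMap K L a)
        * (algebraMap K L y)) * (algebraMap K L y)
        + (algebraMap K L y) ^ 2 * θ
        - (algebraMap K L a) * (algebraMap K L y) ^ 2) * hf
    rw [hexp, key]
  have E : (Matrix.of fun i j : Fin 3 => β.repr (γ ^ (i : ℕ)) j) =
      Matrix.of ![![1, 0, 0], ![0, x + a * y, y],
        ![-2 * c * x * y - a * c * y ^ 2, -2 * b * x * y - (a * b + c) * y ^ 2,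
          x ^ 2 - b * y ^ 2]] := by
    ext i j
    fin_cases i
    · exact e0 j
    · exact e1 j
    · exact e2 j
  rw [show (Matrix.of fun i j : Fin 3 =>
      β.repr (((x + a * y) • θ + y • θ ^ 2) ^ (i : ℕ)) j) =
      Matrix.of fun i j : Fin 3 => β.repr (γ ^ (i : ℕ)) j from rfl, E,
    Matrix.det_fin_three]
  simp only [Matrix.of_apply, Matrix.cons_val', Matrix.cons_val_zero, Matrix.cons_val_one,
    Matrix.head_cons, Matrix.empty_val', Matrix.cons_val_fin_one, Matrix.head_fin_const,
    Matrix.cons_val_two, Matrix.tail_cons]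
  ring
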